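/- Let f_n = |Av_n(321, 4123)|, with the convention f_0 = 1. Then for all n ≥ 4, f_n = 2 f_{n-1} + 2 f_{n-2} - f_{n-3}. -/

import Mathlib

open Equiv

/-- `π` contains the pattern whose one-line notation (relative order) is given by `σ`. -/
def ContainsPat {n k : ℕ} (π : Perm (Fin n)) (σ : Fin k → ℕ) : Prop :=
  ∃ f : Fin k → Fin n, StrictMono f ∧ ∀ a b : Fin k, σ a < σ b ↔ π (f a) < π (f b)

/-- `π` avoids the pattern `σ`. -/
def AvoidsPat {n k : ℕ} (π : Perm (Fin n)) (σ : Fin k → ℕ) : Prop := ¬ ContainsPat π σ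

/-- Number of cycles in the disjoint cycle decomposition, fixed points counted as cycles. -/
def cycCount {n : ℕ} (π : Perm (Fin n)) : ℕ :=
  π.cycleType.card + (Finset.univ.filter (fun x => π x = x)).card

/-- Number of fixed points. -/
def fixCount {n : ℕ} (π : Perm (Fin n)) : ℕ :=
  (Finset.univ.filter (fun x => π x = x)).card

/-- Number of excedances. -/
def excCount {n : ℕ} (π : Perm (Fin n)) : ℕ :=
  (Finset.univ.filter (fun x => x < π x)).card

/-- Number of inversions. -/
def invCount {n : ℕ} (π : Perm (Fin n)) : ℕ :=
  (Finset.univ.filter (fun p : Fin n × Fin n => p.1 < p.2 ∧ π p.2 < π p.1)).card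


/-- `f n` = number of permutations in `Av_n(321, 4123)`. -/
noncomputable def f (n : ℕ) : ℕ :=
  Nat.card {π : Perm (Fin n) // AvoidsPat π ![3,2,1] ∧ AvoidsPat π ![4,1,2,3]}

/-! ### Auxiliary development -/

instance {n k : ℕ} (π : Perm (Fin n)) (σ : Fin k → ℕ) : Decidable (ContainsPat π σ) :=
  decidable_of_iff (∃ f : Fin k → Fin n, (∀ a b : Fin k, a < b → f a < f b) ∧
      ∀ a b : Fin k, σ a < σ b ↔ π (f a) < π (f b)) (by
    constructor
    · rintro ⟨f, h1, h2⟩; exact ⟨f, fun a b hab => h1 a b hab, h2⟩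
    · rintro ⟨f, h1, h2⟩; exact ⟨f, fun a b hab => h1 hab, h2⟩)

instance {n k : ℕ} (π : Perm (Fin n)) (σ : Fin k → ℕ) : Decidable (AvoidsPat π σ) := by
  unfold AvoidsPat; infer_instance

/-- The joint avoidance predicate. -/
def Pp {n : ℕ} (π : Perm (Fin n)) : Prop :=
  AvoidsPat π ![3,2,1] ∧ AvoidsPat π ![4,1,2,3]

instance {n : ℕ} : DecidablePred (Pp (n := n)) := fun _ => by
  unfold Pp AvoidsPat; infer_instance

/-- The set of avoiders as a finset. -/
def Sav (n : ℕ) : Finset (Perm (Fin n)) := Finset.univ.filter Pp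

lemma f_eq (n : ℕ) : f n = (Sav n).card := by
  rw [f, Nat.card_eq_fintype_card]
  exact Fintype.card_subtype _

lemma contains321 {n : ℕ} {π : Perm (Fin n)} {i j k : Fin n} (hij : i < j) (hjk : j < k)
    (h1 : π j < π i) (h2 : π k < π j) : ContainsPat π ![3,2,1] := by
  have hik : i < k := hij.trans hjk
  refine ⟨![i,j,k], ?_, ?_⟩
  · intro a b hab
    fin_cases a <;> fin_cases b <;> simp_all
  · intro a b
    have h3 : π k < π i := h2.trans h1
    fin_cases a <;> fin_cases b <;> simp_all [Fin.lt_asymm, lt_irrefl]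

lemma contains4123 {n : ℕ} {π : Perm (Fin n)} {i j k l : Fin n}
    (hij : i < j) (hjk : j < k) (hkl : k < l)
    (h1 : π j < π k) (h2 : π k < π l) (h3 : π l < π i) : ContainsPat π ![4,1,2,3] := by
  have hik : i < k := hij.trans hjk
  have hjl : j < l := hjk.trans hkl
  have hil : i < l := hij.trans hjl
  refine ⟨![i,j,k,l], ?_, ?_⟩
  · intro a b hab
    fin_cases a <;> fin_cases b <;> simp_all
  · have h4 : π j < π l := h1.trans h2
    have h5 : π k < π i := h2.trans h3
    have h6 : π j < π i := h1.trans h5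
    intro a b
    fin_cases a <;> fin_cases b <;> simp_all [Fin.lt_asymm, lt_irrefl]

/-- Insert the maximal value at position `j`. -/
def ins {m : ℕ} (j : Fin (m+1)) (π : Perm (Fin m)) : Perm (Fin (m+1)) :=
  (finSuccEquiv' j).trans ((Equiv.optionCongr π).trans (finSuccEquiv' (Fin.last m)).symm)

@[simp] lemma ins_self {m : ℕ} (j : Fin (m+1)) (π : Perm (Fin m)) : ins j π j = Fin.last m := by
  simp [ins]

@[simp] lemma ins_succAbove {m : ℕ} (j : Fin (m+1)) (π : Perm (Fin m)) (i : Fin m) :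
    ins j π (j.succAbove i) = (π i).castSucc := by
  simp [ins, Fin.succAbove_last]

lemma ins_injective {m : ℕ} (j : Fin (m+1)) : Function.Injective (ins j (m := m)) := by
  intro a b h
  apply Equiv.ext
  intro i
  have := congrFun (congrArg (fun (e : Perm (Fin (m+1))) => (e : Fin (m+1) → Fin (m+1))) h)
    (j.succAbove i)
  simpa [Fin.castSucc_inj] using this

/-- Delete the entry at position `j` (intended for use when `π j = last`). -/
def del {m : ℕ} (j : Fin (m+1)) (π : Perm (Fin (m+1))) : Perm (Fin m) :=
  Equiv.removeNone ((finSuccEquiv' j).symm.trans (π.trans (finSuccEquiv' (Fin.last m))))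

lemma ins_del {m : ℕ} {j : Fin (m+1)} {π : Perm (Fin (m+1))} (h : π j = Fin.last m) :
    ins j (del j π) = π := by
  apply Equiv.ext
  intro x
  rcases eq_or_ne x j with rfl | hx
  · rw [ins_self, h]
  · obtain ⟨i, rfl⟩ := Fin.exists_succAbove_eq hx
    rw [ins_succAbove]
    have hne : π (j.succAbove i) ≠ Fin.last m := by
      rw [← h]; exact fun hc => (j.succAbove_ne i) (π.injective hc)
    set e := (finSuccEquiv' j).symm.trans (π.trans (finSuccEquiv' (Fin.last m))) with he
    have hsome : e (some i) = some ((π (j.succAbove i)).castPred hne) := by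
      simp only [he, Equiv.trans_apply, finSuccEquiv'_symm_some, Equiv.coe_fn_mk]
      conv_lhs => rw [show π (j.succAbove i) = ((π (j.succAbove i)).castPred hne).castSucc by simp]
      rw [← Fin.succAbove_last, finSuccEquiv'_succAbove]
    have h2 := Equiv.removeNone_some e ⟨_, hsome⟩
    rw [hsome] at h2
    have h3 : del j π i = (π (j.succAbove i)).castPred hne := Option.some_injective _ h2
    rw [h3, Fin.castSucc_castPred]

lemma lift {m k : ℕ} (j : Fin (m+1)) (π : Perm (Fin m)) (σ : Fin k → ℕ)
    (h : ContainsPat π σ) : ContainsPat (ins j π) σ := by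
  obtain ⟨f, hmono, hiff⟩ := h
  refine ⟨fun a => j.succAbove (f a), fun a b hab => ?_, fun a b => ?_⟩
  · exact (Fin.strictMono_succAbove j) (hmono hab)
  · rw [hiff a b, ins_succAbove, ins_succAbove, Fin.castSucc_lt_castSucc_iff]

lemma drop {m k : ℕ} (j : Fin (m+1)) (π : Perm (Fin m)) (σ : Fin k → ℕ)
    (f : Fin k → Fin (m+1)) (hmono : StrictMono f)
    (hiff : ∀ a b : Fin k, σ a < σ b ↔ ins j π (f a) < ins j π (f b))
    (hj : ∀ a, f a ≠ j) : ContainsPat π σ := by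
  choose g hg using fun a => Fin.exists_succAbove_eq (hj a)
  refine ⟨g, fun a b hab => ?_, fun a b => ?_⟩
  · have : j.succAbove (g a) < j.succAbove (g b) := by rw [hg a, hg b]; exact hmono hab
    exact (Fin.succAbove_lt_succAbove_iff).mp this
  · rw [hiff a b, ← hg a, ← hg b, ins_succAbove, ins_succAbove, Fin.castSucc_lt_castSucc_iff]

lemma cases321 {m : ℕ} (π : Perm (Fin (m+1))) (j : Fin (m+1)) (hj : π j = Fin.last m)
    (h : ContainsPat π ![3,2,1]) :
    (∃ f : Fin 3 → Fin (m+1), StrictMono f ∧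
        (∀ a b, (![3,2,1] : Fin 3 → ℕ) a < ![3,2,1] b ↔ π (f a) < π (f b)) ∧ ∀ a, f a ≠ j) ∨
      (∃ b c : Fin (m+1), j < b ∧ b < c ∧ π c < π b) := by
  obtain ⟨f, hmono, hiff⟩ := h
  by_cases huse : ∀ a, f a ≠ j
  · exact Or.inl ⟨f, hmono, hiff, huse⟩
  · push_neg at huse
    obtain ⟨a, ha⟩ := huse
    have hmax : ∀ q, ¬ ((![3,2,1] : Fin 3 → ℕ) a < ![3,2,1] q) := by
      intro q hq
      have := (hiff a q).mp hq
      rw [ha, hj] at this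
      exact absurd this (Fin.not_lt.mpr (Fin.le_last _))
    have ha0 : a = 0 := by
      fin_cases a
      · rfl
      · exact absurd (by norm_num : (![3,2,1] : Fin 3 → ℕ) 1 < ![3,2,1] 0) (hmax 0)
      · exact absurd (by decide : (![3,2,1] : Fin 3 → ℕ) 2 < ![3,2,1] 0) (hmax 0)
    subst ha0
    refine Or.inr ⟨f 1, f 2, ?_, hmono (by decide), ?_⟩
    · rw [← ha]; exact hmono (by decide)
    · exact (hiff 2 1).mp (by decide)

lemma cases4123 {m : ℕ} (π : Perm (Fin (m+1))) (j : Fin (m+1)) (hj : π j = Fin.last m)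
    (h : ContainsPat π ![4,1,2,3]) :
    (∃ f : Fin 4 → Fin (m+1), StrictMono f ∧
        (∀ a b, (![4,1,2,3] : Fin 4 → ℕ) a < ![4,1,2,3] b ↔ π (f a) < π (f b)) ∧ ∀ a, f a ≠ j) ∨
      (∃ b c d : Fin (m+1), j < b ∧ b < c ∧ c < d) := by
  obtain ⟨f, hmono, hiff⟩ := h
  by_cases huse : ∀ a, f a ≠ j
  · exact Or.inl ⟨f, hmono, hiff, huse⟩
  · push_neg at huse
    obtain ⟨a, ha⟩ := huse
    have hmax : ∀ q, ¬ ((![4,1,2,3] : Fin 4 → ℕ) a < ![4,1,2,3] q) := by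
      intro q hq
      have := (hiff a q).mp hq
      rw [ha, hj] at this
      exact absurd this (Fin.not_lt.mpr (Fin.le_last _))
    have ha0 : a = 0 := by
      fin_cases a
      · rfl
      · exact absurd (by norm_num : (![4,1,2,3] : Fin 4 → ℕ) 1 < ![4,1,2,3] 0) (hmax 0)
      · exact absurd (by decide : (![4,1,2,3] : Fin 4 → ℕ) 2 < ![4,1,2,3] 0) (hmax 0)
      · exact absurd (by decide : (![4,1,2,3] : Fin 4 → ℕ) 3 < ![4,1,2,3] 0) (hmax 0)
    subst ha0
    refine Or.inr ⟨f 1, f 2, f 3, ?_, hmono (by decide), hmono (by decide)⟩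
    rw [← ha]; exact hmono (by decide)

lemma L_zero {m : ℕ} (π : Perm (Fin (m+1))) (j : Fin (m+1)) (hj : π j = Fin.last m)
    (hlow : j.val + 3 ≤ m) : ¬ Pp π := by
  set x1 : Fin (m+1) := ⟨j.val+1, by omega⟩
  set x2 : Fin (m+1) := ⟨j.val+2, by omega⟩
  set x3 : Fin (m+1) := ⟨j.val+3, by omega⟩
  have hlt : ∀ x : Fin (m+1), x ≠ j → π x < π j := by
    intro x hx
    rw [hj]
    refine (Fin.le_last _).lt_of_ne (fun hc => ?_)
    exact hx (π.injective (hc.trans hj.symm))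
  have hj1 : j < x1 := by simp [Fin.lt_def, x1]
  have h12 : x1 < x2 := by simp [Fin.lt_def, x1, x2]
  have h23 : x2 < x3 := by simp [Fin.lt_def, x2, x3]
  have hne : ∀ x y : Fin (m+1), x ≠ y → π x ≠ π y := fun x y h hc => h (π.injective hc)
  rintro ⟨hA, hB⟩
  rcases lt_or_gt_of_ne (hne x1 x2 (by simp [x1, x2, Fin.ext_iff])) with h1 | h1
  · rcases lt_or_gt_of_ne (hne x2 x3 (by simp [x2, x3, Fin.ext_iff])) with h2 | h2
    · exact hB (contains4123 hj1 h12 h23 h1 h2 (hlt x3 (by simp [x3, Fin.ext_iff])))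
    · exact hA (contains321 (hj1.trans h12) h23 (hlt x2 (by simp [x2, Fin.ext_iff])) h2)
  · exact hA (contains321 hj1 h12 (hlt x1 (by simp [x1, Fin.ext_iff])) h1)

lemma L_desc {m : ℕ} (π : Perm (Fin (m+2))) (hA : AvoidsPat π ![3,2,1]) :
    π (Fin.castSucc (Fin.last m)) = Fin.last (m+1) ↔
      π (Fin.last (m+1)) < π (Fin.castSucc (Fin.last m)) := by
  have hne : (Fin.castSucc (Fin.last m)) ≠ Fin.last (m+1) := by
    simp [Fin.ext_iff]
  constructor
  · intro h
    rw [h]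
    refine (Fin.le_last _).lt_of_ne (fun hc => ?_)
    exact hne (π.injective (hc.trans h.symm)).symm
  · intro h
    by_contra hc
    set i := π.symm (Fin.last (m+1)) with hi
    have hπi : π i = Fin.last (m+1) := π.apply_symm_apply _
    have hics : i ≠ Fin.castSucc (Fin.last m) := fun he => hc (he ▸ hπi)
    have hilast : i ≠ Fin.last (m+1) := by
      intro he
      rw [he] at hπi
      rw [hπi] at h
      exact absurd h (Fin.not_lt.mpr (Fin.le_last _))
    have hlt : i < Fin.castSucc (Fin.last m) := by
      have e1 : i.val ≠ m := by simpa [Fin.ext_iff] using hics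
      have e2 : i.val ≠ m + 1 := by simpa [Fin.ext_iff] using hilast
      have e3 := i.isLt
      simp only [Fin.lt_def, Fin.coe_castSucc, Fin.val_last]
      omega
    refine hA (contains321 hlt (Fin.castSucc_lt_last _) ?_ h)
    rw [hπi]
    refine (Fin.le_last _).lt_of_ne (fun he => ?_)
    exact hics (π.injective (he.trans hπi.symm)).symm

lemma avoid_ins_last {m : ℕ} (π : Perm (Fin m)) : Pp (ins (Fin.last m) π) ↔ Pp π := by
  constructor
  · rintro ⟨hA, hB⟩
    exact ⟨fun h => hA (lift _ _ _ h), fun h => hB (lift _ _ _ h)⟩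
  · rintro ⟨hA, hB⟩
    constructor
    · intro h
      rcases cases321 _ (Fin.last m) (ins_self _ _) h with ⟨g, hm, hi, hjj⟩ | ⟨b, c, hb, _, _⟩
      · exact hA (drop _ _ _ g hm hi hjj)
      · exact absurd hb (Fin.not_lt.mpr (Fin.le_last _))
    · intro h
      rcases cases4123 _ (Fin.last m) (ins_self _ _) h with ⟨g, hm, hi, hjj⟩ | ⟨b, c, d, hb, _, _⟩
      · exact hB (drop _ _ _ g hm hi hjj)
      · exact absurd hb (Fin.not_lt.mpr (Fin.le_last _))

lemma avoid_ins_pen {m : ℕ} (π : Perm (Fin (m+1))) :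
    Pp (ins (Fin.castSucc (Fin.last m)) π) ↔ Pp π := by
  set j : Fin (m+2) := Fin.castSucc (Fin.last m) with hjdef
  constructor
  · rintro ⟨hA, hB⟩
    exact ⟨fun h => hA (lift _ _ _ h), fun h => hB (lift _ _ _ h)⟩
  · rintro ⟨hA, hB⟩
    constructor
    · intro h
      rcases cases321 _ j (ins_self _ _) h with ⟨g, hm, hi, hjj⟩ | ⟨b, c, hb, hbc, _⟩
      · exact hA (drop _ _ _ g hm hi hjj)
      · have hb' : (m : ℕ) < b.val := hb
        have hbc' : b.val < c.val := hbc
        have := c.isLt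
        omega
    · intro h
      rcases cases4123 _ j (ins_self _ _) h with ⟨g, hm, hi, hjj⟩ | ⟨b, c, d, hb, hbc, hcd⟩
      · exact hB (drop _ _ _ g hm hi hjj)
      · have hb' : (m : ℕ) < b.val := hb
        have hbc' : b.val < c.val := hbc
        have hcd' : c.val < d.val := hcd
        have := d.isLt
        omega

lemma succAbove_ante_a {m : ℕ} :
    (Fin.castSucc (Fin.castSucc (Fin.last m))).succAbove (Fin.castSucc (Fin.last m))
      = (⟨m+1, by omega⟩ : Fin (m+3)) := by
  rw [Fin.succAbove_of_le_castSucc _ _ (by simp [Fin.le_def])]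
  simp [Fin.ext_iff]

lemma succAbove_ante_b {m : ℕ} :
    (Fin.castSucc (Fin.castSucc (Fin.last m))).succAbove (Fin.last (m+1))
      = (⟨m+2, by omega⟩ : Fin (m+3)) := by
  rw [Fin.succAbove_of_le_castSucc _ _ (by simp [Fin.le_def])]
  simp [Fin.ext_iff]

set_option maxHeartbeats 1000000 in
lemma avoid_ins_ante {m : ℕ} (π : Perm (Fin (m+2))) :
    Pp (ins (Fin.castSucc (Fin.castSucc (Fin.last m))) π) ↔
      (Pp π ∧ π (Fin.castSucc (Fin.last m)) < π (Fin.last (m+1))) := by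
  set j : Fin (m+3) := Fin.castSucc (Fin.castSucc (Fin.last m)) with hjdef
  have hxa : ins j π ⟨m+1, by omega⟩ = (π (Fin.castSucc (Fin.last m))).castSucc := by
    rw [← succAbove_ante_a, ins_succAbove]
  have hxb : ins j π ⟨m+2, by omega⟩ = (π (Fin.last (m+1))).castSucc := by
    rw [← succAbove_ante_b, ins_succAbove]
  constructor
  · rintro ⟨hA, hB⟩
    refine ⟨⟨fun h => hA (lift _ _ _ h), fun h => hB (lift _ _ _ h)⟩, ?_⟩
    by_contra hnot
    have hneq : π (Fin.last (m+1)) ≠ π (Fin.castSucc (Fin.last m)) := by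
      intro hc
      have := π.injective hc
      simp [Fin.ext_iff] at this
    have hdesc : π (Fin.last (m+1)) < π (Fin.castSucc (Fin.last m)) :=
      (Fin.not_lt.mp hnot).lt_of_ne hneq
    refine hA (contains321 (i := j) (j := ⟨m+1, by omega⟩) (k := ⟨m+2, by omega⟩)
      (by simp [hjdef, Fin.lt_def]) (by simp [Fin.lt_def]) ?_ ?_)
    · rw [hxa, ins_self]
      exact Fin.castSucc_lt_last _
    · rw [hxa, hxb, Fin.castSucc_lt_castSucc_iff]
      exact hdesc
  · rintro ⟨⟨hA, hB⟩, hasc⟩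
    constructor
    · intro h
      rcases cases321 _ j (ins_self _ _) h with ⟨g, hm, hi, hjj⟩ | ⟨b, c, hb, hbc, hcb⟩
      · exact hA (drop _ _ _ g hm hi hjj)
      · have hb' : (m : ℕ) < b.val := hb
        have hbc' : b.val < c.val := hbc
        have hc2 := c.isLt
        have hbeq : b = (⟨m+1, by omega⟩ : Fin (m+3)) := by
          apply Fin.ext; simp only []; omega
        have hceq : c = (⟨m+2, by omega⟩ : Fin (m+3)) := by
          apply Fin.ext; simp only []; omega
        rw [hbeq, hceq, hxa, hxb, Fin.castSucc_lt_castSucc_iff] at hcb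
        exact absurd hasc (Fin.lt_asymm hcb)
    · intro h
      rcases cases4123 _ j (ins_self _ _) h with ⟨g, hm, hi, hjj⟩ | ⟨b, c, d, hb, hbc, hcd⟩
      · exact hB (drop _ _ _ g hm hi hjj)
      · have hb' : (m : ℕ) < b.val := hb
        have hbc' : b.val < c.val := hbc
        have hcd' : c.val < d.val := hcd
        have := d.isLt
        omega

/-- The fundamental fiber-counting lemma. -/
lemma card_fiber {m : ℕ} (j : Fin (m+1)) (Q : Perm (Fin m) → Prop) [DecidablePred Q]
    (hQ : ∀ π', Pp (ins j π') ↔ Q π') :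
    ((Sav (m+1)).filter (fun π => π j = Fin.last m)).card = (Finset.univ.filter Q).card := by
  refine Finset.card_bij' (fun π _ => del j π) (fun π' _ => ins j π') ?_ ?_ ?_ ?_
  · intro π hπ
    rw [Finset.mem_filter] at hπ ⊢
    obtain ⟨hS, hlast⟩ := hπ
    rw [Sav, Finset.mem_filter] at hS
    refine ⟨Finset.mem_univ _, ?_⟩
    rw [← hQ, ins_del hlast]
    exact hS.2
  · intro π' hπ'
    rw [Finset.mem_filter] at hπ' ⊢
    refine ⟨?_, ins_self _ _⟩
    rw [Sav, Finset.mem_filter]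
    exact ⟨Finset.mem_univ _, (hQ π').mpr hπ'.2⟩
  · intro π hπ
    exact ins_del (Finset.mem_filter.mp hπ).2
  · intro π' _
    exact ins_injective j (ins_del (ins_self j π'))

lemma card_last {m : ℕ} :
    ((Sav (m+1)).filter (fun π => π (Fin.last m) = Fin.last m)).card = (Sav m).card :=
  card_fiber (Fin.last m) Pp avoid_ins_last

lemma card_pen {m : ℕ} :
    ((Sav (m+2)).filter (fun π => π (Fin.castSucc (Fin.last m)) = Fin.last (m+1))).card
      = (Sav (m+1)).card :=
  card_fiber _ Pp avoid_ins_pen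

lemma card_ante {m : ℕ} :
    ((Sav (m+3)).filter
        (fun π => π (Fin.castSucc (Fin.castSucc (Fin.last m))) = Fin.last (m+2))).card
      = ((Sav (m+2)).filter
          (fun π => π (Fin.castSucc (Fin.last m)) < π (Fin.last (m+1)))).card := by
  rw [card_fiber _
    (fun π => Pp π ∧ π (Fin.castSucc (Fin.last m)) < π (Fin.last (m+1))) avoid_ins_ante]
  rw [Sav, Finset.filter_filter]

lemma card_sum {m : ℕ} :
    (Sav (m+1)).card
      = ∑ j : Fin (m+1), ((Sav (m+1)).filter (fun π => π j = Fin.last m)).card := by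
  rw [Finset.card_eq_sum_card_fiberwise
    (f := fun π : Perm (Fin (m+1)) => π.symm (Fin.last m)) (t := Finset.univ)
    (fun x _ => Finset.mem_univ _)]
  refine Finset.sum_congr rfl (fun j _ => ?_)
  congr 1
  apply Finset.filter_congr
  intro π _
  constructor
  · intro h1; rw [← h1]; simp
  · intro h2; rw [Equiv.symm_apply_eq]; exact h2.symm

lemma key (k : ℕ) : (Sav (k+3)).card + (Sav (k+1)).card = 3 * (Sav (k+2)).card := by
  classical
  set g : Fin (k+3) → ℕ :=
    fun j => ((Sav (k+3)).filter (fun π => π j = Fin.last (k+2))).card with hg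
  have hsum : (Sav (k+3)).card = ∑ j : Fin (k+3), g j := card_sum
  have hzero : ∀ j : Fin (k+3), j.val < k → g j = 0 := by
    intro j hj
    rw [hg]
    simp only []
    rw [Finset.card_eq_zero, Finset.filter_eq_empty_iff]
    intro π hπ hlast
    have hPp : Pp π := by
      rw [Sav, Finset.mem_filter] at hπ; exact hπ.2
    exact L_zero π j hlast (by omega) hPp
  have hsplit : ∑ j : Fin (k+3), g j
      = g ⟨k, by omega⟩ + g ⟨k+1, by omega⟩ + g ⟨k+2, by omega⟩ := by
    have hsub : ({⟨k, by omega⟩, ⟨k+1, by omega⟩, ⟨k+2, by omega⟩} : Finset (Fin (k+3)))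
        ⊆ Finset.univ := Finset.subset_univ _
    rw [← Finset.sum_subset hsub (fun j _ hj => ?_)]
    · rw [Finset.sum_insert (by simp [Fin.ext_iff]), Finset.sum_insert (by simp [Fin.ext_iff]),
        Finset.sum_singleton]
      ring
    · simp only [Finset.mem_insert, Finset.mem_singleton, Fin.ext_iff] at hj
      push_neg at hj
      have := j.isLt
      exact hzero j (by omega)
  have e2 : (⟨k+2, by omega⟩ : Fin (k+3)) = Fin.last (k+2) := rfl
  have e1 : (⟨k+1, by omega⟩ : Fin (k+3)) = Fin.castSucc (Fin.last (k+1)) := rfl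
  have e0 : (⟨k, by omega⟩ : Fin (k+3)) = Fin.castSucc (Fin.castSucc (Fin.last k)) := rfl
  have h2 : g ⟨k+2, by omega⟩ = (Sav (k+2)).card := by
    rw [hg]; simp only [e2]; exact card_last
  have h1 : g ⟨k+1, by omega⟩ = (Sav (k+2)).card := by
    rw [hg]; simp only [e1]; exact card_pen
  have h0 : g ⟨k, by omega⟩
      = ((Sav (k+2)).filter
          (fun π => π (Fin.castSucc (Fin.last k)) < π (Fin.last (k+1)))).card := by
    rw [hg]; simp only [e0]; exact card_ante
  have hXY := Finset.card_filter_add_card_filter_not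
    (s := Sav (k+2)) (p := fun π => π (Fin.castSucc (Fin.last k)) < π (Fin.last (k+1)))
  have hnegeq : (Sav (k+2)).filter
        (fun π => ¬ π (Fin.castSucc (Fin.last k)) < π (Fin.last (k+1)))
      = (Sav (k+2)).filter (fun π => π (Fin.castSucc (Fin.last k)) = Fin.last (k+1)) := by
    apply Finset.filter_congr
    intro π hπ
    have hPp : Pp π := by
      rw [Sav, Finset.mem_filter] at hπ; exact hπ.2
    have hd := L_desc π hPp.1
    constructor
    · intro hnlt
      rw [hd]
      refine (Fin.not_lt.mp hnlt).lt_of_ne (fun hc => ?_)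
      have := π.injective hc
      simp [Fin.ext_iff] at this
    · intro heq
      exact Fin.lt_asymm (hd.mp heq)
  have hY : ((Sav (k+2)).filter
      (fun π => π (Fin.castSucc (Fin.last k)) = Fin.last (k+1))).card = (Sav (k+1)).card :=
    card_pen
  rw [hnegeq, hY] at hXY
  omega

theorem statement15 (n : ℕ) (hn : 4 ≤ n) :
    (f n : ℤ) = 2 * f (n - 1) + 2 * f (n - 2) - f (n - 3) := by
  obtain ⟨k, rfl⟩ : ∃ k, n = k + 4 := ⟨n - 4, by omega⟩
  have e1 : k + 4 - 1 = k + 3 := by omega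
  have e2 : k + 4 - 2 = k + 2 := by omega
  have e3 : k + 4 - 3 = k + 1 := by omega
  rw [e1, e2, e3, f_eq, f_eq, f_eq, f_eq]
  have h1 := key (k+1)
  have h2 := key k
  have r1 : k + 1 + 3 = k + 4 := rfl
  have r2 : k + 1 + 2 = k + 3 := rfl
  have r3 : k + 1 + 1 = k + 2 := rfl
  rw [r1, r2, r3] at h1
  omega
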